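/- Let M : Fin k × Fin k × Fin k → ℝ≥0 and β > 0, with S ⊆ Fin k × Fin k, such that all line sums of M are at most β and the vertical line sums equal β exactly for (i,j) ∈ S. Then there exists a matrix M' : Fin k × Fin k × Fin k → ℕ with supp(M') = supp(M) and a positive integer r such that all line sums of M' are at most r² and vertical line sums of M' equal r² for (i,j) ∈ S. -/

import Mathlib

open scoped NNReal
open Filter

lemma rat_mul_den_nat (x : ℚ) (hx : 0 ≤ x) (n : ℕ) (h : x.den ∣ n) :
    ∃ m : ℕ, (m : ℚ) = x * n := by
  obtain ⟨c, rfl⟩ := h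
  refine ⟨x.num.toNat * c, ?_⟩
  have h1 : ((x.num.toNat : ℕ) : ℚ) = (x.num : ℚ) := by
    exact_mod_cast congrArg (Int.cast : ℤ → ℚ) (Int.toNat_of_nonneg (Rat.num_nonneg.2 hx))
  push_cast
  rw [h1, ← mul_assoc, Rat.mul_den_eq_num]

lemma tendsto_approx {V : Submodule ℚ ℝ} [FiniteDimensional ℚ V]
    (b : Module.Basis (Fin (Module.finrank ℚ V)) ℚ V)
    (q : Fin (Module.finrank ℚ V) → ℕ → ℚ)
    (hq : ∀ i n, |((b i : ℝ)) - q i n| < 1 / (n + 1)) (v : V) :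
    Tendsto (fun n => (((b.constr ℚ (fun i => q i n)) v : ℚ) : ℝ)) atTop (nhds (v : ℝ)) := by
  have hqt : ∀ i, Tendsto (fun n => ((q i n : ℚ) : ℝ)) atTop (nhds ((b i : V) : ℝ)) := by
    intro i
    rw [← tendsto_sub_nhds_zero_iff]
    refine squeeze_zero_norm (fun n => ?_) tendsto_one_div_add_atTop_nhds_zero_nat
    rw [Real.norm_eq_abs, abs_sub_comm]
    exact (hq i n).le
  have h1 : ∀ n, (((b.constr ℚ (fun i => q i n)) v : ℚ) : ℝ)
      = ∑ i, (b.equivFun v i : ℝ) * (q i n : ℝ) := by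
    intro n
    rw [b.constr_apply_fintype ℚ _ v]
    push_cast [smul_eq_mul]
    rfl
  have h2 : (v : ℝ) = ∑ i, (b.equivFun v i : ℝ) * ((b i : V) : ℝ) := by
    conv_lhs => rw [← b.sum_equivFun v]
    push_cast [Rat.smul_def]
    rfl
  simp only [h1]
  rw [h2]
  exact tendsto_finset_sum _ fun i _ => tendsto_const_nhds.mul (hqt i)

theorem stmt_16 (k : ℕ) (M : Fin k × Fin k × Fin k → ℝ≥0) (β : ℝ≥0) (hβ : 0 < β)
    (S : Set (Fin k × Fin k))
    (hl1 : ∀ i j : Fin k, ∑ x : Fin k, M (x, i, j) ≤ β)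
    (hl2 : ∀ i j : Fin k, ∑ x : Fin k, M (i, x, j) ≤ β)
    (hl3 : ∀ i j : Fin k, ∑ x : Fin k, M (i, j, x) ≤ β)
    (hS : ∀ p ∈ S, ∑ x : Fin k, M (p.1, p.2, x) = β) :
    ∃ (M' : Fin k × Fin k × Fin k → ℕ) (r : ℕ),
      0 < r ∧
      (∀ p, M' p ≠ 0 ↔ M p ≠ 0) ∧
      (∀ i j : Fin k, ∑ x : Fin k, M' (x, i, j) ≤ r ^ 2) ∧
      (∀ i j : Fin k, ∑ x : Fin k, M' (i, x, j) ≤ r ^ 2) ∧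
      (∀ i j : Fin k, ∑ x : Fin k, M' (i, j, x) ≤ r ^ 2) ∧
      (∀ p ∈ S, ∑ x : Fin k, M' (p.1, p.2, x) = r ^ 2) := by
  classical
  set s : Set ℝ := (Set.range fun p : Fin k × Fin k × Fin k => ((M p : ℝ))) ∪ {(β : ℝ)}
    with hsdef
  have hsfin : s.Finite := (Set.finite_range _).union (Set.finite_singleton _)
  haveI hFD : FiniteDimensional ℚ (Submodule.span ℚ s) :=
    FiniteDimensional.span_of_finite ℚ hsfin
  set V : Submodule ℚ ℝ := Submodule.span ℚ s with hVdef
  haveI : FiniteDimensional ℚ V := hFD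
  let b : Module.Basis (Fin (Module.finrank ℚ V)) ℚ V := Module.finBasis ℚ V
  have happrox : ∀ (i : Fin (Module.finrank ℚ V)) (n : ℕ),
      ∃ r : ℚ, |(b i : ℝ) - r| < 1 / (n + 1) := fun i n => exists_rat_near _ (by positivity)
  choose q hq using happrox
  set ψ : ℕ → V →ₗ[ℚ] ℚ := fun n => b.constr ℚ (fun i => q i n) with hψdef
  have htend : ∀ v : V, Tendsto (fun n => ((ψ n v : ℚ) : ℝ)) atTop (nhds (v : ℝ)) :=
    fun v => tendsto_approx b q hq v
  -- vectors in V
  have hmem : ∀ p, ((M p : ℝ)) ∈ V := fun p => Submodule.subset_span (Or.inl ⟨p, rfl⟩)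
  have hβmem : ((β : ℝ)) ∈ V := Submodule.subset_span (Or.inr rfl)
  set vM : Fin k × Fin k × Fin k → V := fun p => ⟨(M p : ℝ), hmem p⟩ with hvMdef
  set vβ : V := ⟨(β : ℝ), hβmem⟩ with hvβdef
  -- coercion of sums of vM
  have hcoe_sum : ∀ (t : Fin k → Fin k × Fin k × Fin k),
      (((∑ x, vM (t x) : V)) : ℝ) = ((∑ x, M (t x) : ℝ≥0) : ℝ) := by
    intro t
    push_cast
    rfl
  -- eventual conditions
  have hev : ∀ᶠ n in atTop,
      (0 < ψ n vβ) ∧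
      (∀ p, M p ≠ 0 → 0 < ψ n (vM p)) ∧
      (∀ i j : Fin k, ∑ x, M (x, i, j) < β →
        ψ n (∑ x, vM (x, i, j)) < ψ n vβ) ∧
      (∀ i j : Fin k, ∑ x, M (i, x, j) < β →
        ψ n (∑ x, vM (i, x, j)) < ψ n vβ) ∧
      (∀ i j : Fin k, ∑ x, M (i, j, x) < β →
        ψ n (∑ x, vM (i, j, x)) < ψ n vβ) := by
    have e1 : ∀ᶠ n in atTop, 0 < ψ n vβ := by
      have hb : (0 : ℝ) < ((vβ : V) : ℝ) := by
        simpa [hvβdef] using (NNReal.coe_pos.2 hβ)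
      filter_upwards [(htend vβ).eventually_const_lt hb] with n hn
      exact_mod_cast hn
    have e2 : ∀ᶠ n in atTop, ∀ p, M p ≠ 0 → 0 < ψ n (vM p) := by
      rw [eventually_all]
      intro p
      by_cases hp : M p = 0
      · exact Eventually.of_forall fun n h => absurd hp h
      · have hb : (0 : ℝ) < ((vM p : V) : ℝ) := by
          simpa [hvMdef] using (NNReal.coe_pos.2 (pos_iff_ne_zero.mpr hp))
        filter_upwards [(htend (vM p)).eventually_const_lt hb] with n hn _
        exact_mod_cast hn
    have e3 : ∀ (t : Fin k → Fin k × Fin k × Fin k), (∑ x, M (t x)) < β →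
        ∀ᶠ n in atTop, ψ n (∑ x, vM (t x)) < ψ n vβ := by
      intro t ht
      have hlt : ((∑ x, vM (t x) : V) : ℝ) < ((vβ : V) : ℝ) := by
        rw [hcoe_sum t]
        simpa [hvβdef] using (NNReal.coe_lt_coe.2 ht)
      filter_upwards [(htend _).eventually_lt (htend vβ) hlt] with n hn
      exact_mod_cast hn
    have e4 : ∀ (t : Fin k → Fin k → Fin k → Fin k × Fin k × Fin k),
        ∀ᶠ n in atTop, ∀ i j : Fin k, (∑ x, M (t i j x)) < β →
          ψ n (∑ x, vM (t i j x)) < ψ n vβ := by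
      intro t
      rw [eventually_all]
      intro i
      rw [eventually_all]
      intro j
      by_cases h : (∑ x, M (t i j x)) < β
      · filter_upwards [e3 (t i j) h] with n hn _
        exact hn
      · exact Eventually.of_forall fun n hc => absurd hc h
    exact e1.and (e2.and ((e4 fun i j x => (x, i, j)).and
      ((e4 fun i j x => (i, x, j)).and (e4 fun i j x => (i, j, x)))))
  obtain ⟨n, hn1, hn2, hn3, hn4, hn5⟩ := hev.exists
  set B : ℚ := ψ n vβ with hBdef
  set a : Fin k × Fin k × Fin k → ℚ := fun p => ψ n (vM p) with hadef
  have ha0 : ∀ p, M p = 0 → a p = 0 := by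
    intro p hp
    have : vM p = 0 := by
      apply Subtype.ext
      simp [hvMdef, hp]
    simp [hadef, this]
  have hanonneg : ∀ p, 0 ≤ a p := by
    intro p
    by_cases hp : M p = 0
    · exact (ha0 p hp).ge
    · exact (hn2 p hp).le
  have hsum : ∀ (t : Fin k → Fin k × Fin k × Fin k),
      ∑ x, a (t x) = ψ n (∑ x, vM (t x)) := by
    intro t
    rw [map_sum]
  -- the vector equality in the tight case
  have htight : ∀ (t : Fin k → Fin k × Fin k × Fin k),
      (∑ x, M (t x)) = β → (∑ x, vM (t x)) = vβ := by
    intro t ht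
    apply Subtype.ext
    rw [hcoe_sum t]
    simp [hvβdef, ht]
  have hlineQ : ∀ (t : Fin k → Fin k × Fin k × Fin k),
      (∑ x, M (t x)) ≤ β →
      (((∑ x, M (t x)) < β → ψ n (∑ x, vM (t x)) < B)) →
      ∑ x, a (t x) ≤ B := by
    intro t hle hstrict
    rcases lt_or_eq_of_le hle with hlt | heq
    · rw [hsum t]; exact (hstrict hlt).le
    · rw [hsum t, htight t heq]
  -- clear denominators
  set D : ℕ := B.den * ∏ p : Fin k × Fin k × Fin k, (a p).den with hDdef
  have hDpos : 0 < D := Nat.mul_pos B.den_pos (Finset.prod_pos fun p _ => (a p).den_pos)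
  have hBden : B.den ∣ D := dvd_mul_right _ _
  have haden : ∀ p, (a p).den ∣ D :=
    fun p => dvd_mul_of_dvd_right (Finset.dvd_prod_of_mem _ (Finset.mem_univ p)) _
  obtain ⟨Bn, hBn⟩ := rat_mul_den_nat B hn1.le D hBden
  have hNex : ∀ p, ∃ m : ℕ, (m : ℚ) = a p * D := fun p =>
    rat_mul_den_nat (a p) (hanonneg p) D (haden p)
  choose N hN using hNex
  have hBnpos : 0 < Bn := by
    have : (0 : ℚ) < (Bn : ℚ) := by
      rw [hBn]
      positivity
    exact_mod_cast this
  -- sums of N in ℚ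
  have hNsum : ∀ (t : Fin k → Fin k × Fin k × Fin k),
      ((∑ x, N (t x) : ℕ) : ℚ) = (∑ x, a (t x)) * D := by
    intro t
    push_cast [hN]
    rw [Finset.sum_mul]
  have hNle : ∀ (t : Fin k → Fin k × Fin k × Fin k),
      ∑ x, a (t x) ≤ B → ∑ x, N (t x) ≤ Bn := by
    intro t h
    have : ((∑ x, N (t x) : ℕ) : ℚ) ≤ (Bn : ℚ) := by
      rw [hNsum t, hBn]
      exact mul_le_mul_of_nonneg_right h (by positivity)
    exact_mod_cast this
  have hNeq : ∀ (t : Fin k → Fin k × Fin k × Fin k),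
      ∑ x, a (t x) = B → ∑ x, N (t x) = Bn := by
    intro t h
    have : ((∑ x, N (t x) : ℕ) : ℚ) = (Bn : ℚ) := by
      rw [hNsum t, hBn, h]
    exact_mod_cast this
  refine ⟨fun p => N p * Bn, Bn, hBnpos, ?_, ?_, ?_, ?_, ?_⟩
  · -- support
    intro p
    have hND : (N p : ℚ) = a p * D := hN p
    constructor
    · intro h hMp
      apply h
      have : a p = 0 := ha0 p hMp
      have : N p = 0 := by
        have : ((N p : ℕ) : ℚ) = 0 := by rw [hND, this]; ring
        exact_mod_cast this
      simp [this]
    · intro hMp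
      have hap : 0 < a p := hn2 p hMp
      have : (0 : ℚ) < (N p : ℚ) := by
        rw [hND]; positivity
      have hNp : 0 < N p := by exact_mod_cast this
      positivity
  · intro i j
    have := hNle (fun x => (x, i, j)) (hlineQ _ (hl1 i j) (hn3 i j))
    calc ∑ x, N (x, i, j) * Bn = (∑ x, N (x, i, j)) * Bn := by rw [Finset.sum_mul]
      _ ≤ Bn * Bn := Nat.mul_le_mul_right _ this
      _ = Bn ^ 2 := (sq Bn).symm
  · intro i j
    have := hNle (fun x => (i, x, j)) (hlineQ _ (hl2 i j) (hn4 i j))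
    calc ∑ x, N (i, x, j) * Bn = (∑ x, N (i, x, j)) * Bn := by rw [Finset.sum_mul]
      _ ≤ Bn * Bn := Nat.mul_le_mul_right _ this
      _ = Bn ^ 2 := (sq Bn).symm
  · intro i j
    have := hNle (fun x => (i, j, x)) (hlineQ _ (hl3 i j) (hn5 i j))
    calc ∑ x, N (i, j, x) * Bn = (∑ x, N (i, j, x)) * Bn := by rw [Finset.sum_mul]
      _ ≤ Bn * Bn := Nat.mul_le_mul_right _ this
      _ = Bn ^ 2 := (sq Bn).symm
  · intro p hp
    have heq : ∑ x, M (p.1, p.2, x) = β := hS p hp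
    have : ∑ x, a (p.1, p.2, x) = B := by
      rw [hsum, htight _ heq]
    have := hNeq (fun x => (p.1, p.2, x)) this
    calc ∑ x, N (p.1, p.2, x) * Bn = (∑ x, N (p.1, p.2, x)) * Bn := by rw [Finset.sum_mul]
      _ = Bn * Bn := by rw [this]
      _ = Bn ^ 2 := (sq Bn).symm
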